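/- The assignment (Δ', s) ↦ {i + s : i ∈ Δ'} is a bijection from the set of pairs (Δ', s), where Δ' is an M,N-invariant set fitting (0^{M−1}1, 0^{N−1}1) and s is an integer with s ≥ 1, onto the set of M,N-invariant sets fitting (0^M, 0^N). Moreover, writing Δ = {i + s : i ∈ Δ'}, one has area(Δ) = area(Δ') + s − 1 and pdinv(Δ) = pdinv(Δ'). -/

import Mathlib

/-- The alphabet {0, 1, •}. -/
inductive Symb where
  | zero : Symb
  | one : Symb
  | bullet : Symb
deriving DecidableEq

/-- An `M,N`-invariant set: a subset of ℕ with finite complement,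
closed under adding `M` and adding `N`. -/
def Invariant (M N : ℕ) (Δ : Set ℕ) : Prop :=
  {n : ℕ | n ∉ Δ}.Finite ∧ ∀ i ∈ Δ, i + M ∈ Δ ∧ i + N ∈ Δ

/-- `c` is a north step of `Δ`: `c ∉ Δ` and `c + N ∈ Δ`. -/
def NorthStep (N : ℕ) (Δ : Set ℕ) (c : ℕ) : Prop := c ∉ Δ ∧ c + N ∈ Δ

/-- `c` is an east step of `Δ`: `c ∉ Δ` and `c + M ∈ Δ`. -/
def EastStep (M : ℕ) (Δ : Set ℕ) (c : ℕ) : Prop := c ∉ Δ ∧ c + M ∈ Δ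

/-- `area Δ` is the number of `c ≥ M + N` with `c ∉ Δ`. -/
noncomputable def area (M N : ℕ) (Δ : Set ℕ) : ℕ := {c : ℕ | M + N ≤ c ∧ c ∉ Δ}.ncard

/-- `pdinv Δ` is the number of pairs `(c, d)` with `c < d`, `M ≤ d < c + M`,
`c` a north step of `Δ`, and `d ∉ Δ`. -/
noncomputable def pdinv (M N : ℕ) (Δ : Set ℕ) : ℕ :=
  {p : ℕ × ℕ | p.1 < p.2 ∧ M ≤ p.2 ∧ p.2 < p.1 + M ∧ NorthStep N Δ p.1 ∧ p.2 ∉ Δ}.ncard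

/-- `Δ` fits the pair of words `(v, w)`, where `v` has length `M` and `w` has length `N`. -/
def Fits (M N : ℕ) (Δ : Set ℕ) (v w : List Symb) : Prop :=
  v.length = M ∧ w.length = N ∧
  (∀ (i : ℕ) (hi : i < v.length),
    (v.get ⟨i, hi⟩ = Symb.bullet ↔ i ∈ Δ) ∧
    (v.get ⟨i, hi⟩ = Symb.one ↔ NorthStep N Δ i) ∧
    (v.get ⟨i, hi⟩ = Symb.zero ↔ (i ∉ Δ ∧ i + N ∉ Δ))) ∧
  (∀ (i : ℕ) (hi : i < w.length),
    (w.get ⟨i, hi⟩ = Symb.bullet ↔ i ∈ Δ) ∧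
    (w.get ⟨i, hi⟩ = Symb.one ↔ EastStep M Δ i) ∧
    (w.get ⟨i, hi⟩ = Symb.zero ↔ (i ∉ Δ ∧ i + M ∉ Δ)))

/-- Decrement: `dec Δ = {i : ℕ | i + 1 ∈ Δ}`. -/
def dec (Δ : Set ℕ) : Set ℕ := {i : ℕ | i + 1 ∈ Δ}


lemma mem_shift {Δ' : Set ℕ} {s x : ℕ} :
    x ∈ (fun i => i + s) '' Δ' ↔ s ≤ x ∧ x - s ∈ Δ' := by
  constructor
  · rintro ⟨i, hi, rfl⟩
    exact ⟨Nat.le_add_left s i, by simpa using hi⟩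
  · rintro ⟨hx, h⟩
    exact ⟨x - s, h, Nat.sub_add_cancel hx⟩

lemma mem_shift' {Δ' : Set ℕ} {s c : ℕ} :
    c + s ∈ (fun i => i + s) '' Δ' ↔ c ∈ Δ' := by
  rw [mem_shift]
  constructor
  · rintro ⟨_, h⟩; simpa using h
  · intro h; exact ⟨by omega, by simpa using h⟩

lemma get_word {M : ℕ} (i : ℕ)
    (hi : i < (List.replicate (M - 1) Symb.zero ++ [Symb.one]).length) :
    (List.replicate (M - 1) Symb.zero ++ [Symb.one]).get ⟨i, hi⟩ =
      if i = M - 1 then Symb.one else Symb.zero := by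
  simp only [List.length_append, List.length_replicate, List.length_singleton] at hi
  rcases lt_or_ge i (M - 1) with h | h
  · rw [List.get_eq_getElem, List.getElem_append_left (by simpa using h)]
    simp [Nat.ne_of_lt h]
  · have : i = M - 1 := by omega
    subst this
    simp [List.getElem_append_right]

lemma fits_zero_iff {M N : ℕ} (Δ : Set ℕ) :
    Fits M N Δ (List.replicate M Symb.zero) (List.replicate N Symb.zero) ↔
      ∀ c < M + N, c ∉ Δ := by
  constructor
  · rintro ⟨_, _, hv, hw⟩ c hc
    rcases lt_or_ge c M with h | h
    · have h3 := (hv c (by simpa using h)).2.2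
      simp only [List.get_eq_getElem, List.getElem_replicate, true_iff] at h3
      exact h3.1
    · have h3 := (hw (c - M) (by simp only [List.length_replicate]; omega)).2.2
      simp only [List.get_eq_getElem, List.getElem_replicate, true_iff] at h3
      have h4 := h3.2
      rwa [Nat.sub_add_cancel h] at h4
  · intro h
    refine ⟨by simp, by simp, fun i hi => ?_, fun i hi => ?_⟩
    · simp only [List.length_replicate] at hi
      simp only [List.get_eq_getElem, List.getElem_replicate]
      refine ⟨by simp [h i (by omega)], ?_, by simp [h i (by omega), h (i + N) (by omega)]⟩
      simp only [NorthStep]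
      constructor
      · intro h'; exact absurd h' (by decide)
      · rintro ⟨_, h2⟩; exact absurd h2 (h (i + N) (by omega))
    · simp only [List.length_replicate] at hi
      simp only [List.get_eq_getElem, List.getElem_replicate]
      refine ⟨by simp [h i (by omega)], ?_, by simp [h i (by omega), h (i + M) (by omega)]⟩
      simp only [EastStep]
      constructor
      · intro h'; exact absurd h' (by decide)
      · rintro ⟨_, h2⟩; exact absurd h2 (h (i + M) (by omega))

lemma fits_one_iff {M N : ℕ} (hM : 0 < M) (hN : 0 < N) (Δ : Set ℕ) :
    Fits M N Δ (List.replicate (M - 1) Symb.zero ++ [Symb.one])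
      (List.replicate (N - 1) Symb.zero ++ [Symb.one]) ↔
      (∀ c < M + N - 1, c ∉ Δ) ∧ M + N - 1 ∈ Δ := by
  constructor
  · rintro ⟨_, _, hv, hw⟩
    have hns := (hv (M - 1) (by simp)).2.1
    rw [get_word, if_pos rfl] at hns
    have hns' : NorthStep N Δ (M - 1) := hns.mp rfl
    have hmem : M + N - 1 ∈ Δ := by
      have := hns'.2; rwa [show M - 1 + N = M + N - 1 by omega] at this
    refine ⟨fun c hc => ?_, hmem⟩
    rcases lt_or_ge c (M - 1) with h | h
    · have h3 := (hv c (by simp; omega)).2.2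
      rw [get_word, if_neg (by omega)] at h3
      exact (h3.mp rfl).1
    · rcases eq_or_lt_of_le h with h' | h'
      · rw [← h']; exact hns'.1
      · -- c ≥ M, use w at index c - M < N - 1
        have h3 := (hw (c - M) (by simp; omega)).2.2
        rw [get_word, if_neg (by omega)] at h3
        have h4 := (h3.mp rfl).2
        rwa [Nat.sub_add_cancel (by omega)] at h4
  · rintro ⟨hlow, hmem⟩
    refine ⟨by simp; omega, by simp; omega, fun i hi => ?_, fun i hi => ?_⟩
    · rw [get_word]
      simp only [List.length_append, List.length_replicate, List.length_singleton] at hi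
      by_cases h : i = M - 1
      · rw [if_pos h]; subst h
        refine ⟨by simp [hlow (M-1) (by omega)], ?_, ?_⟩
        · simp only [true_iff, NorthStep]
          exact ⟨hlow (M-1) (by omega), by rwa [show M - 1 + N = M + N - 1 by omega]⟩
        · constructor
          · intro h'; exact absurd h' (by decide)
          · rintro ⟨_, h2⟩
            exact absurd (by rwa [show M - 1 + N = M + N - 1 by omega]) h2
      · rw [if_neg h]
        have hi' : i < M - 1 := by omega
        refine ⟨by simp [hlow i (by omega)], ?_,
          by simp [hlow i (by omega), hlow (i + N) (by omega)]⟩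
        constructor
        · intro h'; exact absurd h' (by decide)
        · rintro ⟨_, h2⟩; exact absurd h2 (hlow (i + N) (by omega))
    · rw [get_word]
      simp only [List.length_append, List.length_replicate, List.length_singleton] at hi
      by_cases h : i = N - 1
      · rw [if_pos h]; subst h
        refine ⟨by simp [hlow (N-1) (by omega)], ?_, ?_⟩
        · simp only [true_iff, EastStep]
          exact ⟨hlow (N-1) (by omega), by rwa [show N - 1 + M = M + N - 1 by omega]⟩
        · constructor
          · intro h'; exact absurd h' (by decide)
          · rintro ⟨_, h2⟩
            exact absurd (by rwa [show N - 1 + M = M + N - 1 by omega]) h2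
      · rw [if_neg h]
        have hi' : i < N - 1 := by omega
        refine ⟨by simp [hlow i (by omega)], ?_,
          by simp [hlow i (by omega), hlow (i + M) (by omega)]⟩
        constructor
        · intro h'; exact absurd h' (by decide)
        · rintro ⟨_, h2⟩; exact absurd h2 (hlow (i + M) (by omega))

lemma shift_invariant {M N : ℕ} {Δ' : Set ℕ} (hInv : Invariant M N Δ') (s : ℕ) :
    Invariant M N ((fun i => i + s) '' Δ') := by
  constructor
  · apply Set.Finite.subset ((Set.finite_Iio s).union (hInv.1.image (fun i => i + s)))
    intro n hn
    by_cases h : n < s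
    · exact Or.inl h
    · exact Or.inr ⟨n - s, fun h' => hn (mem_shift.mpr ⟨by omega, h'⟩), by show n - s + s = n; omega⟩
  · rintro c ⟨i, hi, rfl⟩
    exact ⟨⟨i + M, (hInv.2 i hi).1, by show i + M + s = i + s + M; omega⟩, ⟨i + N, (hInv.2 i hi).2, by show i + N + s = i + s + N; omega⟩⟩

lemma shift_not_mem {M N : ℕ} {Δ' : Set ℕ} {s : ℕ}
    (hP : (∀ c < M + N - 1, c ∉ Δ') ∧ M + N - 1 ∈ Δ') :
    ∀ c < M + N - 1 + s, c ∉ (fun i => i + s) '' Δ' := by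
  intro c hc hmem
  rw [mem_shift] at hmem
  exact hP.1 (c - s) (by omega) hmem.2

lemma area_shift {M N : ℕ} (hM : 0 < M) (hN : 0 < N) {Δ' : Set ℕ} {s : ℕ}
    (hInv : Invariant M N Δ')
    (hP : (∀ c < M + N - 1, c ∉ Δ') ∧ M + N - 1 ∈ Δ') (hs : 1 ≤ s) :
    area M N ((fun i => i + s) '' Δ') = area M N Δ' + s - 1 := by
  have hA'fin : {c : ℕ | M + N ≤ c ∧ c ∉ Δ'}.Finite :=
    hInv.1.subset (fun c hc => hc.2)
  have key : {c : ℕ | M + N ≤ c ∧ c ∉ (fun i => i + s) '' Δ'} =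
      ((fun i => i + s) '' {c | M + N ≤ c ∧ c ∉ Δ'}) ∪ Set.Ico (M + N) (M + N - 1 + s) := by
    ext x
    constructor
    · rintro ⟨hx1, hx2⟩
      rcases lt_or_ge x (M + N - 1 + s) with h | h
      · exact Or.inr ⟨hx1, h⟩
      · have hne : x ≠ M + N - 1 + s := by
          intro h'; exact hx2 (h' ▸ ⟨M + N - 1, hP.2, rfl⟩)
        refine Or.inl ⟨x - s, ⟨by omega, fun h' => hx2 (mem_shift.mpr ⟨by omega, h'⟩)⟩,
          by show x - s + s = x; omega⟩
    · rintro (⟨i, ⟨hi1, hi2⟩, rfl⟩ | ⟨h1, h2⟩)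
      · exact ⟨by show M + N ≤ i + s; omega, fun hmem => hi2 (mem_shift'.mp hmem)⟩
      · exact ⟨h1, shift_not_mem hP x h2⟩
  have hdisj : Disjoint ((fun i => i + s) '' {c | M + N ≤ c ∧ c ∉ Δ'})
      (Set.Ico (M + N) (M + N - 1 + s)) := by
    rw [Set.disjoint_left]
    rintro x ⟨i, ⟨hi1, _⟩, rfl⟩ h2
    simp only [Set.mem_Ico] at h2
    have : M + N ≤ i := hi1
    omega
  rw [area, area, key, Set.ncard_union_eq hdisj (hA'fin.image _) (Set.finite_Ico _ _)]
  rw [Set.ncard_image_of_injective _ (add_left_injective s)]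
  rw [show Set.Ico (M + N) (M + N - 1 + s) = ↑(Finset.Ico (M + N) (M + N - 1 + s)) by simp,
    Set.ncard_coe_finset, Nat.card_Ico]
  omega

lemma pdinv_shift {M N : ℕ} (hM : 0 < M) (hN : 0 < N) {Δ' : Set ℕ} {s : ℕ}
    (hP : (∀ c < M + N - 1, c ∉ Δ') ∧ M + N - 1 ∈ Δ') (hs : 1 ≤ s) :
    pdinv M N ((fun i => i + s) '' Δ') = pdinv M N Δ' := by
  have key : {p : ℕ × ℕ | p.1 < p.2 ∧ M ≤ p.2 ∧ p.2 < p.1 + M ∧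
        NorthStep N ((fun i => i + s) '' Δ') p.1 ∧ p.2 ∉ (fun i => i + s) '' Δ'} =
      (fun p : ℕ × ℕ => (p.1 + s, p.2 + s)) ''
        {p : ℕ × ℕ | p.1 < p.2 ∧ M ≤ p.2 ∧ p.2 < p.1 + M ∧
          NorthStep N Δ' p.1 ∧ p.2 ∉ Δ'} := by
    ext ⟨c, d⟩
    constructor
    · rintro ⟨h1, h2, h3, ⟨hc1, hc2⟩, hd⟩
      have h4 := mem_shift.mp hc2
      have hc_ge : M - 1 + s ≤ c := by
        by_contra hlt
        push_neg at hlt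
        exact hP.1 (c + N - s) (by omega) h4.2
      refine ⟨(c - s, d - s), ⟨by omega, by omega, by omega,
        ⟨fun h => hc1 ⟨c - s, h, by show c - s + s = c; omega⟩,
          by rw [show c - s + N = c + N - s by omega]; exact h4.2⟩,
        fun h => hd ⟨d - s, h, by show d - s + s = d; omega⟩⟩, ?_⟩
      simp only [Prod.mk.injEq]
      omega
    · rintro ⟨⟨c', d'⟩, ⟨h1, h2, h3, ⟨hc1, hc2⟩, hd⟩, heq⟩
      simp only [Prod.mk.injEq] at heq
      obtain ⟨rfl, rfl⟩ := heq
      refine ⟨by omega, by omega, by omega,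
        ⟨fun h => hc1 (mem_shift'.mp h), ⟨c' + N, hc2, by show c' + N + s = c' + s + N; omega⟩⟩,
        fun h => hd (mem_shift'.mp h)⟩
  rw [pdinv, pdinv, key, Set.ncard_image_of_injective]
  intro p q h
  simp only [Prod.mk.injEq] at h
  exact Prod.ext (by omega) (by omega)

/-- The assignment `(Δ', s) ↦ {i + s : i ∈ Δ'}` is a bijection from the
set of pairs `(Δ', s)` with `Δ'` an `M,N`-invariant set fitting `(0^{M−1}1, 0^{N−1}1)` and
`s ≥ 1`, onto the set of `M,N`-invariant sets fitting `(0^M, 0^N)`. Moreover, writing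
`Δ = {i + s : i ∈ Δ'}`, one has `area Δ = area Δ' + s − 1` and `pdinv Δ = pdinv Δ'`. -/
theorem increment_bijection (M N : ℕ) (hM : 0 < M) (hN : 0 < N) :
    Set.BijOn (fun p : Set ℕ × ℕ => (fun i => i + p.2) '' p.1)
      {p : Set ℕ × ℕ | Invariant M N p.1 ∧
        Fits M N p.1 (List.replicate (M - 1) Symb.zero ++ [Symb.one])
          (List.replicate (N - 1) Symb.zero ++ [Symb.one]) ∧ 1 ≤ p.2}
      {Δ : Set ℕ | Invariant M N Δ ∧
        Fits M N Δ (List.replicate M Symb.zero) (List.replicate N Symb.zero)} ∧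
    ∀ (Δ' : Set ℕ) (s : ℕ), Invariant M N Δ' →
      Fits M N Δ' (List.replicate (M - 1) Symb.zero ++ [Symb.one])
        (List.replicate (N - 1) Symb.zero ++ [Symb.one]) → 1 ≤ s →
      area M N ((fun i => i + s) '' Δ') = area M N Δ' + s - 1 ∧
      pdinv M N ((fun i => i + s) '' Δ') = pdinv M N Δ' := by
  constructor
  · refine ⟨?_, ?_, ?_⟩
    · -- MapsTo
      rintro ⟨Δ', s⟩ ⟨hInv, hFits, hs⟩
      have hP := (fits_one_iff hM hN Δ').mp hFits
      refine ⟨shift_invariant hInv s, (fits_zero_iff _).mpr ?_⟩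
      intro c hc
      exact shift_not_mem hP c (by omega)
    · -- InjOn
      rintro ⟨Δ₁, s₁⟩ ⟨h1I, h1F, h1s⟩ ⟨Δ₂, s₂⟩ ⟨h2I, h2F, h2s⟩ heq
      have hP1 := (fits_one_iff hM hN Δ₁).mp h1F
      have hP2 := (fits_one_iff hM hN Δ₂).mp h2F
      simp only at heq
      have hm1 : M + N - 1 + s₁ ∈ (fun i => i + s₂) '' Δ₂ := by
        rw [← heq]; exact ⟨M + N - 1, hP1.2, rfl⟩
      have hm2 : M + N - 1 + s₂ ∈ (fun i => i + s₁) '' Δ₁ := by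
        rw [heq]; exact ⟨M + N - 1, hP2.2, rfl⟩
      have hs1 : s₂ ≤ s₁ := by
        by_contra h
        exact shift_not_mem hP2 _ (by omega) hm1
      have hs2 : s₁ ≤ s₂ := by
        by_contra h
        exact shift_not_mem hP1 _ (by omega) hm2
      obtain rfl : s₁ = s₂ := le_antisymm hs2 hs1
      have hsets : Δ₁ = Δ₂ := by
        ext c
        constructor
        · intro h
          exact mem_shift'.mp (heq ▸ mem_shift'.mpr h)
        · intro h
          exact mem_shift'.mp (heq ▸ mem_shift'.mpr h : c + s₁ ∈ (fun i => i + s₁) '' Δ₁)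
      rw [hsets]
    · -- SurjOn
      rintro Δ ⟨hInv, hFits⟩
      have hQ := (fits_zero_iff Δ).mp hFits
      have hne : Δ.Nonempty := by
        rcases Δ.eq_empty_or_nonempty with h | h
        · exfalso
          have hfin := hInv.1
          rw [h] at hfin
          simp only [Set.mem_empty_iff_false, not_false_iff, Set.setOf_true] at hfin
          exact Set.infinite_univ hfin
        · exact h
      set m := sInf Δ with hm_def
      have hm : m ∈ Δ := Nat.sInf_mem hne
      have hmge : M + N ≤ m := by
        by_contra h
        exact hQ m (by omega) hm
      set s := m - (M + N - 1) with hs_def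
      have hs : 1 ≤ s := by omega
      have hms : m = M + N - 1 + s := by omega
      refine ⟨({i : ℕ | i + s ∈ Δ}, s), ⟨?_, ?_, hs⟩, ?_⟩
      · constructor
        · have : {n : ℕ | n ∉ {i : ℕ | i + s ∈ Δ}} = (fun i => i + s) ⁻¹' {n | n ∉ Δ} := rfl
          rw [this]
          exact Set.Finite.preimage (Set.injOn_of_injective (add_left_injective s)) hInv.1
        · intro i hi
          constructor
          · show i + M + s ∈ Δ
            rw [show i + M + s = i + s + M by omega]
            exact (hInv.2 _ hi).1
          · show i + N + s ∈ Δ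
            rw [show i + N + s = i + s + N by omega]
            exact (hInv.2 _ hi).2
      · rw [fits_one_iff hM hN]
        constructor
        · intro c hc
          show c + s ∉ Δ
          intro h
          have := Nat.sInf_le h
          omega
        · show M + N - 1 + s ∈ Δ
          rw [← hms]; exact hm
      · show (fun i => i + s) '' {i : ℕ | i + s ∈ Δ} = Δ
        ext x
        constructor
        · rintro ⟨i, hi, rfl⟩
          exact hi
        · intro hx
          have hxm : m ≤ x := Nat.sInf_le hx
          exact ⟨x - s, by show x - s + s ∈ Δ; rwa [Nat.sub_add_cancel (by omega)],
            by show x - s + s = x; omega⟩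
  · intro Δ' s hInv hFits hs
    have hP := (fits_one_iff hM hN Δ').mp hFits
    exact ⟨area_shift hM hN hInv hP hs, pdinv_shift hM hN hP hs⟩
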